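/- Let g be a nondegenerate symmetric bilinear form on a vector space V of dimension n ≥ 4, let u be a nonzero null vector and u' a null vector with g(u,u') = 1. Suppose W is an algebraic Weyl tensor (curvature symmetries plus trace-free) with W(v,v',·,·) = 0 for all v, v' in u⊥. Then W(u,·,·,·) = 0. -/

import Mathlib

/-- Let `g` be a nondegenerate symmetric bilinear form on `V` with `dim V = n ≥ 4`, `u` a
nonzero null vector, `u'` a null vector with `g(u,u') = 1`.  If `W` is an algebraic Weyl
tensor (curvature symmetries plus trace-freeness, the latter expressed via arbitrary
pairs of `g`-biorthogonal bases) with `W(v,v',·,·) = 0` for all `v, v' ∈ u⊥`, then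
`W(u,·,·,·) = 0`. -/
theorem stmt_7 {V : Type*} [AddCommGroup V] [Module ℝ V] [FiniteDimensional ℝ V]
    (n : ℕ) (hn : 4 ≤ n) (hdim : Module.finrank ℝ V = n)
    (g : V →ₗ[ℝ] V →ₗ[ℝ] ℝ)
    (hgsym : ∀ x y, g x y = g y x)
    (hgnd : ∀ x, (∀ y, g x y = 0) → x = 0)
    (W : V →ₗ[ℝ] V →ₗ[ℝ] V →ₗ[ℝ] V →ₗ[ℝ] ℝ)
    (hskew₁ : ∀ x y z w, W x y z w = - W y x z w)
    (hpair : ∀ x y z w, W x y z w = W z w x y)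
    (hbianchi : ∀ x y z w, W x y z w + W y z x w + W z x y w = 0)
    (htracefree : ∀ b b' : Fin n → V,
      (∀ i j, g (b i) (b' j) = if i = j then 1 else 0) →
      ∀ x w, ∑ i, W (b i) x w (b' i) = 0)
    (u : V) (hu0 : u ≠ 0) (hunull : g u u = 0)
    (u' : V) (hu'null : g u' u' = 0) (huu' : g u u' = 1)
    (hperp : ∀ v v', g u v = 0 → g u v' = 0 → ∀ z w, W v v' z w = 0) :
    ∀ x y z, W u x y z = 0 := by
  classical
  have hu'u : g u' u = 1 := by rw [hgsym]; exact huu'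
  -- antisymmetry in the last two slots
  have hskew₂ : ∀ x y z w, W x y z w = - W x y w z := by
    intro x y z w
    rw [hpair x y z w, hskew₁ z w x y, ← hpair w z x y]
  have hdiag : ∀ x z w, W x x z w = 0 := by
    intro x z w
    have h := hskew₁ x x z w
    linarith
  have hdiag' : ∀ x y z, W x y z z = 0 := by
    intro x y z
    have h := hskew₂ x y z z
    linarith
  -- the orthogonal complement of span {u, u'}
  set K : Submodule ℝ V := LinearMap.ker (g u) ⊓ LinearMap.ker (g u') with hKdef
  have hmemK : ∀ v : V, v ∈ K ↔ g u v = 0 ∧ g u' v = 0 := by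
    intro v
    simp [hKdef, LinearMap.mem_ker]
  have hdecomp : ∀ v : V, v - (g u' v) • u - (g u v) • u' ∈ K := by
    intro v
    rw [hmemK]
    constructor
    · simp [map_sub, map_smul, smul_eq_mul, hunull, huu']
    · simp [map_sub, map_smul, smul_eq_mul, hu'u, hu'null]
  -- span of u, u'
  have hlin : LinearIndependent ℝ ![u, u'] := by
    rw [LinearIndependent.pair_iff]
    intro s t hst
    have h1 : g u' (s • u + t • u') = 0 := by rw [hst]; simp
    have h2 : g u (s • u + t • u') = 0 := by rw [hst]; simp
    simp [map_add, map_smul, smul_eq_mul, hunull, huu', hu'null, hu'u] at h1 h2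
    exact ⟨h1, h2⟩
  set S : Submodule ℝ V := Submodule.span ℝ (Set.range ![u, u']) with hSdef
  have hSrank : Module.finrank ℝ S = 2 := by
    rw [hSdef, finrank_span_eq_card hlin]
    simp
  have hsup : K ⊔ S = ⊤ := by
    rw [Submodule.eq_top_iff']
    intro v
    refine Submodule.mem_sup.mpr
      ⟨v - (g u' v) • u - (g u v) • u', hdecomp v,
        (g u' v) • u + (g u v) • u', ?_, by abel⟩
    have hu_mem : u ∈ S := Submodule.subset_span ⟨0, rfl⟩
    have hu'_mem : u' ∈ S := Submodule.subset_span ⟨1, rfl⟩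
    exact Submodule.add_mem _ (Submodule.smul_mem _ _ hu_mem)
      (Submodule.smul_mem _ _ hu'_mem)
  have hinf : K ⊓ S = ⊥ := by
    rw [eq_bot_iff]
    intro x hx
    obtain ⟨hxK, hxS⟩ := Submodule.mem_inf.mp hx
    rw [hmemK] at hxK
    rw [hSdef] at hxS
    obtain ⟨c, hc⟩ := (Submodule.mem_span_range_iff_exists_fun ℝ).mp hxS
    rw [Fin.sum_univ_two] at hc
    simp only [Matrix.cons_val_zero, Matrix.cons_val_one, Matrix.head_cons] at hc
    have h1 : g u x = 0 := hxK.1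
    have h2 : g u' x = 0 := hxK.2
    rw [← hc] at h1 h2
    simp [map_add, map_smul, smul_eq_mul, hunull, huu', hu'null, hu'u] at h1 h2
    rw [Submodule.mem_bot, ← hc, h1, h2]
    simp
  have hKrank : Module.finrank ℝ K = n - 2 := by
    have h := Submodule.finrank_sup_add_finrank_inf_eq K S
    rw [hsup, hinf, finrank_top, hdim, hSrank, finrank_bot] at h
    omega
  -- the restricted bilinear form on K and a biorthogonal pair of bases of K
  set Bk : LinearMap.BilinForm ℝ K := LinearMap.BilinForm.restrict g K with hBkdef
  have hBkapp : ∀ x y : K, Bk x y = g (x : V) (y : V) := by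
    intro x y
    simp [hBkdef]
  have hBknd : Bk.Nondegenerate := by
    suffices hL : LinearMap.SeparatingLeft Bk from
      ⟨hL, fun y hy => hL y (fun x => by rw [hBkapp, hgsym, ← hBkapp]; exact hy x)⟩
    intro x hx
    have hxv : ∀ y : V, g (x : V) y = 0 := by
      intro y
      have hy : y = (y - (g u' y) • u - (g u y) • u')
          + ((g u' y) • u + (g u y) • u') := by abel
      have hxu : g (x : V) u = 0 := by rw [hgsym]; exact ((hmemK _).mp x.2).1
      have hxu' : g (x : V) u' = 0 := by rw [hgsym]; exact ((hmemK _).mp x.2).2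
      have hx0 : g (x : V) (y - (g u' y) • u - (g u y) • u') = 0 := by
        have := hx ⟨_, hdecomp y⟩
        rwa [hBkapp] at this
      rw [hy, map_add, hx0, map_add, map_smul, map_smul, hxu, hxu']
      simp
    exact Subtype.ext (hgnd _ hxv)
  let eb : Module.Basis (Fin (n - 2)) ℝ K :=
    (Module.finBasis ℝ K).reindex (finCongr hKrank)
  let fb : Module.Basis (Fin (n - 2)) ℝ K := Bk.dualBasis hBknd eb
  set E : Fin (n - 2) → V := fun i => (eb i : V) with hEdef
  set F : Fin (n - 2) → V := fun i => (fb i : V) with hFdef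
  have hE : ∀ i, g u (E i) = 0 ∧ g u' (E i) = 0 := fun i => (hmemK _).mp (eb i).2
  have hF : ∀ i, g u (F i) = 0 ∧ g u' (F i) = 0 := fun i => (hmemK _).mp (fb i).2
  have hEF : ∀ i j, g (E i) (F j) = if i = j then 1 else 0 := by
    intro i j
    rw [hgsym]
    have h := LinearMap.BilinForm.apply_dualBasis_left (B := Bk) hBknd eb j i
    rw [hBkapp] at h
    exact h
  -- the adapted biorthogonal pair of bases of V
  set b : Fin n → V := fun i =>
    if (i : ℕ) = 0 then u else if (i : ℕ) = 1 then u'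
      else E ⟨(i : ℕ) - 2, by have := i.isLt; omega⟩ with hbdef
  set b' : Fin n → V := fun i =>
    if (i : ℕ) = 0 then u' else if (i : ℕ) = 1 then u
      else F ⟨(i : ℕ) - 2, by have := i.isLt; omega⟩ with hb'def
  have hbio : ∀ i j, g (b i) (b' j) = if i = j then 1 else 0 := by
    intro i j
    simp only [hbdef, hb'def]
    by_cases hi0 : (i : ℕ) = 0
    · rw [if_pos hi0]
      by_cases hj0 : (j : ℕ) = 0
      · rw [if_pos hj0, if_pos (Fin.ext (by omega)), huu']
      · rw [if_neg hj0, if_neg (show ¬ i = j from fun h => hj0 (by rw [← h, hi0]))]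
        by_cases hj1 : (j : ℕ) = 1
        · rw [if_pos hj1]; exact hunull
        · rw [if_neg hj1]; exact (hF _).1
    · rw [if_neg hi0]
      by_cases hi1 : (i : ℕ) = 1
      · rw [if_pos hi1]
        by_cases hj0 : (j : ℕ) = 0
        · rw [if_pos hj0, if_neg (show ¬ i = j from fun h => hi0 (by rw [h, hj0]))]
          exact hu'null
        · rw [if_neg hj0]
          by_cases hj1 : (j : ℕ) = 1
          · rw [if_pos hj1, if_pos (Fin.ext (by omega)), hu'u]
          · rw [if_neg hj1, if_neg (show ¬ i = j from fun h => hj1 (by rw [← h, hi1]))]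
            exact (hF _).2
      · rw [if_neg hi1]
        by_cases hj0 : (j : ℕ) = 0
        · rw [if_pos hj0, if_neg (show ¬ i = j from fun h => hi0 (by rw [h, hj0]))]
          rw [hgsym]
          exact (hE _).2
        · rw [if_neg hj0]
          by_cases hj1 : (j : ℕ) = 1
          · rw [if_pos hj1, if_neg (show ¬ i = j from fun h => hi1 (by rw [h, hj1]))]
            rw [hgsym]
            exact (hE _).1
          · rw [if_neg hj1, hEF]
            by_cases hij : i = j
            · rw [if_pos (by rw [hij]), if_pos hij]
            · rw [if_neg (show ¬ _ from fun h => hij (Fin.ext (by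
                have : ((i : ℕ) - 2 : ℕ) = (j : ℕ) - 2 := congrArg Fin.val h
                omega))), if_neg hij]
  -- the key trace identity: W(u,u',q,u') = 0 for q ⊥ u
  have hβ : ∀ q, g u q = 0 → W u u' q u' = 0 := by
    intro q hq
    have htr := htracefree b b' hbio u' q
    have h0 : (⟨0, by omega⟩ : Fin n) ∈ (Finset.univ : Finset (Fin n)) :=
      Finset.mem_univ _
    have hzero : ∀ i : Fin n, i ∈ (Finset.univ : Finset (Fin n)) →
        i ≠ ⟨0, by omega⟩ → W (b i) u' q (b' i) = 0 := by
      intro i _ hi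
      have hi0 : (i : ℕ) ≠ 0 := fun h => hi (Fin.ext h)
      simp only [hbdef, hb'def, if_neg hi0]
      by_cases hi1 : (i : ℕ) = 1
      · rw [if_pos hi1, if_pos hi1]
        exact hdiag u' q u
      · rw [if_neg hi1, if_neg hi1, hpair]
        exact hperp q _ hq (hF _).1 _ _
    have hsum : ∑ i, W (b i) u' q (b' i)
        = W (b ⟨0, by omega⟩) u' q (b' ⟨0, by omega⟩) :=
      Finset.sum_eq_single_of_mem _ h0 hzero
    rw [hsum] at htr
    have hb0 : b ⟨0, by omega⟩ = u := by simp [hbdef]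
    have hb'0 : b' ⟨0, by omega⟩ = u' := by simp [hb'def]
    rwa [hb0, hb'0] at htr
  have hβ' : ∀ q, g u q = 0 → W u u' u' q = 0 := by
    intro q hq
    rw [hskew₂, hβ q hq, neg_zero]
  -- the main computation
  intro x y z
  obtain ⟨a, x₀, hx₀, rfl⟩ : ∃ a x₀, g u x₀ = 0 ∧ x = a • u' + x₀ :=
    ⟨g u x, x - g u x • u',
      by simp [map_sub, map_smul, smul_eq_mul, huu'], by abel⟩
  obtain ⟨c, y₀, hy₀, rfl⟩ : ∃ c y₀, g u y₀ = 0 ∧ y = c • u' + y₀ :=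
    ⟨g u y, y - g u y • u',
      by simp [map_sub, map_smul, smul_eq_mul, huu'], by abel⟩
  obtain ⟨d, z₀, hz₀, rfl⟩ : ∃ d z₀, g u z₀ = 0 ∧ z = d • u' + z₀ :=
    ⟨g u z, z - g u z • u',
      by simp [map_sub, map_smul, smul_eq_mul, huu'], by abel⟩
  have h1 : ∀ p q, W u x₀ p q = 0 := fun p q => hperp u x₀ hunull hx₀ p q
  have t1 : W u u' u' u' = 0 := hdiag' u u' u'
  have t2 : W u u' u' z₀ = 0 := hβ' z₀ hz₀
  have t3 : W u u' y₀ u' = 0 := hβ y₀ hy₀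
  have t4 : W u u' y₀ z₀ = 0 := by
    rw [hpair]
    exact hperp y₀ z₀ hy₀ hz₀ _ _
  simp [map_add, map_smul, LinearMap.add_apply, LinearMap.smul_apply,
    smul_eq_mul, h1, t1, t2, t3, t4]
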